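/- Let p ∈ [1,∞) and let (X,d) be a complete, p-convex, reflexive metric space. Then every Borel probability measure μ on X with finite p-th moment (∫ d(x,x_0)^p dμ(x) < ∞ for some x_0) has a p-barycenter, i.e. the function y ↦ ∫ d(x,y)^p dμ(x) attains its infimum over X. If moreover p ∈ (1,∞) and (X,d) is strictly p-convex, then the p-barycenter is unique. -/

import Mathlib

open Filter Topology Metric Set MeasureTheory
open scoped ENNReal

section Defs

variable (X : Type) [MetricSpace X]

/-- `m` is a midpoint of `x` and `y`. -/
def IsMidpoint {X : Type} [MetricSpace X] (x y m : X) : Prop :=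
  dist x m = dist x y / 2 ∧ dist y m = dist x y / 2

/-- `(X,d)` admits midpoints. -/
def AdmitsMidpoints : Prop := ∀ x y : X, ∃ m, IsMidpoint x y m

/-- The `p`-mean of two nonnegative reals, `p ∈ [1,∞]`. -/
noncomputable def pMean (p : ℝ≥0∞) (a b : ℝ) : ℝ :=
  if p = ∞ then max a b else ((a ^ p.toReal + b ^ p.toReal) / 2) ^ (1 / p.toReal)

/-- `p`-convexity. -/
def PConvex (p : ℝ≥0∞) : Prop :=
  AdmitsMidpoints X ∧ ∀ x y z m : X, IsMidpoint x y m →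
    dist m z ≤ pMean p (dist x z) (dist y z)

/-- strict `p`-convexity. -/
def StrictlyPConvex (p : ℝ≥0∞) : Prop :=
  AdmitsMidpoints X ∧ ∀ x y z m : X, IsMidpoint x y m →
    (if p = 1 then |dist x z - dist y z| < dist x y else x ≠ y) →
    dist m z < pMean p (dist x z) (dist y z)

/-- uniform `p`-convexity. -/
def UniformlyPConvex (p : ℝ≥0∞) : Prop :=
  AdmitsMidpoints X ∧ ∀ ε : ℝ, 0 < ε → ∃ ρ : ℝ, ρ ∈ Set.Ioo (0:ℝ) 1 ∧
    ∀ x y z m : X, IsMidpoint x y m →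
      (if p = 1 then |dist x z - dist y z| + ε * pMean 1 (dist x z) (dist y z) < dist x y
        else ε * pMean p (dist x z) (dist y z) < dist x y) →
      dist m z ≤ (1 - ρ) * pMean p (dist x z) (dist y z)

/-- Busemann non-positive curvature condition. -/
def Busemann : Prop :=
  AdmitsMidpoints X ∧ ∀ x₀ x₁ y₀ y₁ xm ym : X,
    IsMidpoint x₀ x₁ xm → IsMidpoint y₀ y₁ ym →
      dist xm ym ≤ (dist x₀ y₀ + dist x₁ y₁) / 2

/-- `γ` (restricted to `[0,1]`) is a geodesic from `x` to `y`. -/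
def IsGeodesic {X : Type} [MetricSpace X] (γ : ℝ → X) (x y : X) : Prop :=
  γ 0 = x ∧ γ 1 = y ∧ ∀ s ∈ Set.Icc (0:ℝ) 1, ∀ t ∈ Set.Icc (0:ℝ) 1,
    dist (γ s) (γ t) = |s - t| * dist x y

/-- A subset is (geodesically) convex if it contains all geodesics between its points. -/
def GConvex {X : Type} [MetricSpace X] (C : Set X) : Prop :=
  ∀ x ∈ C, ∀ y ∈ C, ∀ γ : ℝ → X, IsGeodesic γ x y → ∀ t ∈ Set.Icc (0:ℝ) 1, γ t ∈ C

/-- The convex hull: the smallest convex set containing `A`. -/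
def gConvexHull {X : Type} [MetricSpace X] (A : Set X) : Set X :=
  ⋂₀ {C : Set X | GConvex C ∧ A ⊆ C}

/-- `∞`-convexity. -/
def InftyConvex : Prop :=
  AdmitsMidpoints X ∧ ∀ x y z m : X, IsMidpoint x y m →
    dist m z ≤ max (dist x z) (dist y z)

/-- strict `∞`-convexity. -/
def StrictlyInftyConvex : Prop :=
  AdmitsMidpoints X ∧ ∀ x y z m : X, IsMidpoint x y m → x ≠ y →
    dist m z < max (dist x z) (dist y z)

/-- uniform `∞`-convexity. -/
def UniformlyInftyConvex : Prop :=
  AdmitsMidpoints X ∧ ∀ ε : ℝ, 0 < ε → ∃ ρ : ℝ, ρ ∈ Set.Ioo (0:ℝ) 1 ∧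
    ∀ x y z m : X, IsMidpoint x y m →
      ε * max (dist x z) (dist y z) < dist x y →
      dist m z ≤ (1 - ρ) * max (dist x z) (dist y z)

/-- `ρ` works as a modulus of nearly uniform convexity for the parameters `ε`, `R`:
for every infinite `ε`-separated family in a ball of radius `r ≤ R` around `y`, the ball
`B_{(1-ρ)r}(y)` intersects the closed convex hull of the family. -/
def NUCModulus (ε R ρ : ℝ) : Prop :=
  ∀ (ι : Type) [Infinite ι], ∀ (x : ι → X) (y : X) (r : ℝ), r ≤ R →
    (∀ i j : ι, i ≠ j → ε ≤ dist (x i) (x j)) → (∀ i, dist (x i) y ≤ r) →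
    (Metric.closedBall y ((1 - ρ) * r) ∩ closure (gConvexHull (Set.range x))).Nonempty

/-- Nearly uniform convexity. -/
def NearlyUniformlyConvex : Prop :=
  InftyConvex X ∧ ∀ R : ℝ, 0 < R → ∀ ε : ℝ, 0 < ε → ∃ ρ : ℝ, 0 < ρ ∧ NUCModulus X ε R ρ

/-- Reflexivity: every decreasing directed family of nonempty bounded closed convex sets
has nonempty intersection. -/
def MetricReflexive : Prop :=
  ∀ (I : Type) [Nonempty I] [Preorder I] [IsDirected I (· ≤ ·)], ∀ C : I → Set X,
    (∀ i, (C i).Nonempty) → (∀ i, Bornology.IsBounded (C i)) → (∀ i, IsClosed (C i)) →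
    (∀ i, GConvex (C i)) → (∀ i j : I, j ≤ i → C i ⊆ C j) → (⋂ i, C i).Nonempty

/-- The co-convex topology: the weakest topology containing all complements of closed
convex sets. -/
def coConvexTopology : TopologicalSpace X :=
  TopologicalSpace.generateFrom {U : Set X | ∃ C : Set X, IsClosed C ∧ GConvex C ∧ U = Cᶜ}

/-- The set of limit points of the sequence `x` in the co-convex topology. -/
def coLim {X : Type} [MetricSpace X] (x : ℕ → X) : Set X :=
  {a : X | Filter.Tendsto x Filter.atTop (@nhds X (coConvexTopology X) a)}

/-- Countable reflexivity. -/
def CountableReflexive : Prop :=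
  MetricReflexive X ∧ ∀ x : ℕ → X, (coLim x).Nonempty →
    ∃ φ : ℕ → ℕ, StrictMono φ ∧
      coLim x = ⋂ m : ℕ, closure (gConvexHull ((fun n => x (φ n)) '' Set.Ici m))

/-- Quasi-convexity: all sublevel sets are convex. -/
def GQuasiConvex {X : Type} [MetricSpace X] (f : X → ℝ) : Prop :=
  ∀ c : ℝ, GConvex {x : X | f x ≤ c}

/-- Quasi-monotonicity: both quasi-convex and quasi-concave. -/
def GQuasiMonotone {X : Type} [MetricSpace X] (f : X → ℝ) : Prop :=
  GQuasiConvex f ∧ GQuasiConvex (fun x => -f x)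

/-- The `p`-mean for real `p ∈ [1,∞)`. -/
noncomputable def pMeanR (p a b : ℝ) : ℝ := ((a ^ p + b ^ p) / 2) ^ (1 / p)

/-- `p`-convexity for real `p`. -/
def PConvexR (p : ℝ) : Prop :=
  AdmitsMidpoints X ∧ ∀ x y z m : X, IsMidpoint x y m →
    dist m z ≤ pMeanR p (dist x z) (dist y z)

/-- strict `p`-convexity for real `p`. -/
def StrictlyPConvexR (p : ℝ) : Prop :=
  AdmitsMidpoints X ∧ ∀ x y z m : X, IsMidpoint x y m →
    (if p = 1 then |dist x z - dist y z| < dist x y else x ≠ y) →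
    dist m z < pMeanR p (dist x z) (dist y z)

/-- uniform `p`-convexity for real `p`. -/
def UniformlyPConvexR (p : ℝ) : Prop :=
  AdmitsMidpoints X ∧ ∀ ε : ℝ, 0 < ε → ∃ ρ : ℝ, ρ ∈ Set.Ioo (0:ℝ) 1 ∧
    ∀ x y z m : X, IsMidpoint x y m →
      ε * pMeanR p (dist x z) (dist y z) < dist x y →
      dist m z ≤ (1 - ρ) * pMeanR p (dist x z) (dist y z)

/-- `ω(z,(x_n)) = limsup_n d(z,x_n)`. -/
noncomputable def asymRadius {X : Type} [MetricSpace X] (x : ℕ → X) (z : X) : ℝ :=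
  Filter.limsup (fun n => dist z (x n)) Filter.atTop

/-- `a` is the (unique) asymptotic center of the sequence `x`. -/
def IsAsymptoticCenter {X : Type} [MetricSpace X] (x : ℕ → X) (a : X) : Prop :=
  (∀ z : X, asymRadius x a ≤ asymRadius x z) ∧
  ∀ b : X, (∀ z : X, asymRadius x b ≤ asymRadius x z) → b = a

/-- Weak sequential convergence: `a` is the asymptotic center of every subsequence. -/
def WeakSeqConv {X : Type} [MetricSpace X] (x : ℕ → X) (a : X) : Prop :=
  ∀ φ : ℕ → ℕ, StrictMono φ → IsAsymptoticCenter (fun n => x (φ n)) a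

end Defs

set_option linter.unusedSectionVars false

/-- A closed set containing 0, 1 and closed under midpoints contains `Icc 0 1`. -/
lemma icc_subset_of_midpoint_closed {S : Set ℝ} (hS : IsClosed S) (h0 : (0:ℝ) ∈ S)
    (h1 : (1:ℝ) ∈ S) (hmid : ∀ s ∈ S, ∀ t ∈ S, (s + t)/2 ∈ S) :
    Set.Icc (0:ℝ) 1 ⊆ S := by
  have dyad : ∀ n : ℕ, ∀ k : ℕ, k ≤ 2^n → ((k : ℝ)/2^n) ∈ S := by
    intro n
    induction n with
    | zero =>
      intro k hk
      interval_cases k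
      · simpa using h0
      · simpa using h1
    | succ n ih =>
      intro k hk
      rcases Nat.even_or_odd k with ⟨j, hj⟩ | ⟨j, hj⟩
      · have hj' : j ≤ 2^n := by omega
        have := ih j hj'
        have : ((k : ℝ)/2^(n+1)) = (j : ℝ)/2^n := by
          subst hj; push_cast; ring
        rw [this]
        exact ih j hj'
      · have hk' : k < 2^(n+1) := by
          rcases lt_or_eq_of_le hk with h | h
          · exact h
          · exfalso; omega
        have hj1 : j + 1 ≤ 2^n := by omega
        have hj0 : j ≤ 2^n := by omega
        have hmem := hmid _ (ih j hj0) _ (ih (j+1) hj1)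
        have heq : (((j:ℕ) : ℝ)/2^n + (((j+1 : ℕ)):ℝ)/2^n)/2 = (k : ℝ)/2^(n+1) := by
          subst hj; push_cast; ring
        rw [heq] at hmem
        exact hmem
  intro t ht
  obtain ⟨ht0, ht1⟩ := ht
  have hseq : ∀ n : ℕ, ((⌊t * 2^n⌋₊ : ℝ)/2^n) ∈ S := by
    intro n
    apply dyad n
    have : t * 2^n ≤ ((2^n : ℕ) : ℝ) := by
      push_cast
      nlinarith [pow_pos (by norm_num : (0:ℝ) < 2) n]
    calc ⌊t * 2^n⌋₊ ≤ ⌊((2^n : ℕ) : ℝ)⌋₊ := Nat.floor_le_floor this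
    _ = 2^n := Nat.floor_natCast _
  have htend : Tendsto (fun n : ℕ => ((⌊t * 2^n⌋₊ : ℝ)/2^n)) atTop (𝓝 t) := by
    rw [tendsto_iff_dist_tendsto_zero]
    apply squeeze_zero (fun n => dist_nonneg) (g := fun n : ℕ => (1/2 : ℝ)^n)
    · intro n
      have h2 : (0:ℝ) < 2^n := pow_pos (by norm_num) n
      have hfl : ((⌊t * 2^n⌋₊ : ℝ)) ≤ t * 2^n := Nat.floor_le (by positivity)
      have hfl2 : t * 2^n < (⌊t * 2^n⌋₊ : ℝ) + 1 := Nat.lt_floor_add_one _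
      rw [Real.dist_eq, abs_le, div_pow, one_pow]
      have hu : ((⌊t * 2^n⌋₊ : ℝ)) = ((⌊t * 2^n⌋₊ : ℝ)/2^n) * 2^n :=
        (div_mul_cancel₀ _ (ne_of_gt h2)).symm
      have h1n : (1/2^n : ℝ) * 2^n = 1 := div_mul_cancel₀ _ (ne_of_gt h2)
      constructor
      · nlinarith
      · nlinarith
    · exact tendsto_pow_atTop_nhds_zero_of_lt_one (by norm_num) (by norm_num)
  exact hS.mem_of_tendsto htend (Eventually.of_forall hseq)

section Analysis

variable {X : Type} [MetricSpace X] [MeasurableSpace X] [BorelSpace X]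
  {p : ℝ} {μ : MeasureTheory.Measure X} [IsProbabilityMeasure μ]

lemma rpow_add_le_aux (hp : 1 ≤ p) {a b : ℝ} (ha : 0 ≤ a) (hb : 0 ≤ b) :
    (a + b) ^ p ≤ 2 ^ p * (a ^ p + b ^ p) := by
  have hp0 : (0:ℝ) ≤ p := le_trans zero_le_one hp
  have h1 : a + b ≤ 2 * max a b := by
    rcases le_total a b with h | h
    · simp [max_eq_right h]; linarith
    · simp [max_eq_left h]; linarith
  calc (a + b) ^ p ≤ (2 * max a b) ^ p :=
        Real.rpow_le_rpow (by positivity) h1 hp0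
    _ = 2 ^ p * (max a b) ^ p := Real.mul_rpow (by norm_num) (le_max_of_le_left ha)
    _ ≤ 2 ^ p * (a ^ p + b ^ p) := by
        apply mul_le_mul_of_nonneg_left _ (by positivity)
        rcases le_total a b with h | h
        · rw [max_eq_right h]; nlinarith [Real.rpow_nonneg ha p]
        · rw [max_eq_left h]; nlinarith [Real.rpow_nonneg hb p]

lemma cont_distp (hp : 1 ≤ p) (y : X) : Continuous (fun x : X => dist x y ^ p) :=
  (Continuous.dist continuous_id continuous_const).rpow_const
    (fun _ => Or.inr (le_trans zero_le_one hp))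

lemma integrable_distp (hp : 1 ≤ p) {x₀ : X} (h0 : Integrable (fun x => dist x x₀ ^ p) μ)
    (y : X) : Integrable (fun x => dist x y ^ p) μ := by
  have hp0 : (0:ℝ) ≤ p := le_trans zero_le_one hp
  apply Integrable.mono' (g := fun x => 2 ^ p * (dist x x₀ ^ p + dist x₀ y ^ p))
    ((h0.add (integrable_const _)).const_mul _)
    ((cont_distp hp y).aestronglyMeasurable)
  filter_upwards with x
  rw [Real.norm_eq_abs, abs_of_nonneg (Real.rpow_nonneg dist_nonneg p)]
  calc dist x y ^ p ≤ (dist x x₀ + dist x₀ y) ^ p :=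
        Real.rpow_le_rpow dist_nonneg (dist_triangle _ _ _) hp0
    _ ≤ 2 ^ p * (dist x x₀ ^ p + dist x₀ y ^ p) :=
        rpow_add_le_aux hp dist_nonneg dist_nonneg

lemma cont_F (hp : 1 ≤ p) {x₀ : X} (h0 : Integrable (fun x => dist x x₀ ^ p) μ) :
    Continuous (fun y => ∫ x, dist x y ^ p ∂μ) := by
  have hp0 : (0:ℝ) ≤ p := le_trans zero_le_one hp
  rw [continuous_iff_continuousAt]
  intro y₀
  apply MeasureTheory.continuousAt_of_dominated
    (bound := fun x => 2 ^ p * (dist x y₀ ^ p + 1))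
  · filter_upwards with y using (cont_distp hp y).aestronglyMeasurable
  · filter_upwards [Metric.ball_mem_nhds y₀ one_pos] with y hy
    filter_upwards with x
    rw [Real.norm_eq_abs, abs_of_nonneg (Real.rpow_nonneg dist_nonneg p)]
    have h1 : dist x y ≤ dist x y₀ + 1 := by
      have := dist_triangle x y₀ y
      have : dist y₀ y < 1 := by rw [dist_comm]; exact Metric.mem_ball.mp hy
      linarith [dist_triangle x y₀ y]
    calc dist x y ^ p ≤ (dist x y₀ + 1) ^ p :=
          Real.rpow_le_rpow dist_nonneg h1 hp0
      _ ≤ 2 ^ p * (dist x y₀ ^ p + 1 ^ p) :=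
          rpow_add_le_aux hp dist_nonneg zero_le_one
      _ = 2 ^ p * (dist x y₀ ^ p + 1) := by rw [Real.one_rpow]
  · exact ((integrable_distp hp h0 y₀).add (integrable_const _)).const_mul _
  · filter_upwards with x
    exact ((Continuous.dist continuous_const continuous_id).rpow_const
      (fun _ => Or.inr hp0)).continuousAt

lemma pMeanR_rpow (hp : 1 ≤ p) {a b : ℝ} (ha : 0 ≤ a) (hb : 0 ≤ b) :
    pMeanR p a b ^ p = (a ^ p + b ^ p) / 2 := by
  have hp0 : p ≠ 0 := ne_of_gt (lt_of_lt_of_le one_pos hp)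
  have hu : (0:ℝ) ≤ (a ^ p + b ^ p) / 2 := by
    have := Real.rpow_nonneg ha p; have := Real.rpow_nonneg hb p; linarith
  rw [pMeanR, ← Real.rpow_mul hu, one_div, inv_mul_cancel₀ hp0, Real.rpow_one]

lemma rpow_one_div_rpow (hp : 1 ≤ p) {u : ℝ} (hu : 0 ≤ u) : (u ^ (1/p)) ^ p = u := by
  have hp0 : p ≠ 0 := ne_of_gt (lt_of_lt_of_le one_pos hp)
  rw [← Real.rpow_mul hu, one_div, inv_mul_cancel₀ hp0, Real.rpow_one]

lemma F_mid_le (hp : 1 ≤ p) (hconv : PConvexR X p) {x₀ : X}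
    (h0 : Integrable (fun x => dist x x₀ ^ p) μ) {a b m : X} (hm : IsMidpoint a b m) :
    ∫ x, dist x m ^ p ∂μ ≤ ((∫ x, dist x a ^ p ∂μ) + ∫ x, dist x b ^ p ∂μ) / 2 := by
  have hp0 : (0:ℝ) ≤ p := le_trans zero_le_one hp
  have hpt : ∀ x : X, dist x m ^ p ≤ (dist x a ^ p + dist x b ^ p) / 2 := by
    intro x
    have h := hconv.2 a b x m hm
    calc dist x m ^ p = dist m x ^ p := by rw [dist_comm]
      _ ≤ pMeanR p (dist a x) (dist b x) ^ p :=
          Real.rpow_le_rpow dist_nonneg h hp0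
      _ = (dist a x ^ p + dist b x ^ p) / 2 := pMeanR_rpow hp dist_nonneg dist_nonneg
      _ = (dist x a ^ p + dist x b ^ p) / 2 := by rw [dist_comm a x, dist_comm b x]
  calc ∫ x, dist x m ^ p ∂μ ≤ ∫ x, (dist x a ^ p + dist x b ^ p) / 2 ∂μ :=
        integral_mono (integrable_distp hp h0 m)
          (((integrable_distp hp h0 a).add (integrable_distp hp h0 b)).div_const 2) hpt
    _ = ((∫ x, dist x a ^ p ∂μ) + ∫ x, dist x b ^ p ∂μ) / 2 := by
        rw [integral_div, integral_add (integrable_distp hp h0 a) (integrable_distp hp h0 b)]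

lemma F_mid_lt (hp1 : 1 < p) (hstrict : StrictlyPConvexR X p) {x₀ : X}
    (h0 : Integrable (fun x => dist x x₀ ^ p) μ) {a b m : X} (hab : a ≠ b)
    (hm : IsMidpoint a b m) :
    ∫ x, dist x m ^ p ∂μ < ((∫ x, dist x a ^ p ∂μ) + ∫ x, dist x b ^ p ∂μ) / 2 := by
  have hp : 1 ≤ p := hp1.le
  have hp0 : (0:ℝ) < p := lt_of_lt_of_le one_pos hp
  have hpt : ∀ x : X, dist x m ^ p < (dist x a ^ p + dist x b ^ p) / 2 := by
    intro x
    have h := hstrict.2 a b x m hm (by rw [if_neg (by linarith : ¬ p = 1)]; exact hab)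
    calc dist x m ^ p = dist m x ^ p := by rw [dist_comm]
      _ < pMeanR p (dist a x) (dist b x) ^ p :=
          Real.rpow_lt_rpow dist_nonneg h hp0
      _ = (dist a x ^ p + dist b x ^ p) / 2 := pMeanR_rpow hp dist_nonneg dist_nonneg
      _ = (dist x a ^ p + dist x b ^ p) / 2 := by rw [dist_comm a x, dist_comm b x]
  have hf := integrable_distp hp h0 m
  have hg : Integrable (fun x => (dist x a ^ p + dist x b ^ p) / 2) μ :=
    ((integrable_distp hp h0 a).add (integrable_distp hp h0 b)).div_const 2
  have hpos : 0 < ∫ x, ((dist x a ^ p + dist x b ^ p) / 2 - dist x m ^ p) ∂μ := by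
    rw [integral_pos_iff_support_of_nonneg
      (fun x => sub_nonneg.2 (hpt x).le) (hg.sub hf)]
    have hsupp : Function.support
        (fun x : X => (dist x a ^ p + dist x b ^ p) / 2 - dist x m ^ p) = Set.univ :=
      Set.eq_univ_of_forall fun x => (sub_pos.2 (hpt x)).ne'
    rw [hsupp]
    simp
  rw [integral_sub hg hf, integral_div,
    integral_add (integrable_distp hp h0 a) (integrable_distp hp h0 b)] at hpos
  linarith

lemma sublevel_gconvex {F : X → ℝ} (hFc : Continuous F)
    (hq : ∀ a b m : X, IsMidpoint a b m → F m ≤ max (F a) (F b)) (c : ℝ) :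
    GConvex {y : X | F y ≤ c} := by
  intro x hx y hy γ hγ t ht
  obtain ⟨hγ0, hγ1, hγd⟩ := hγ
  set S : Set ℝ := Set.Icc (0:ℝ) 1 ∩ (fun s => F (γ s)) ⁻¹' Set.Iic c with hSdef
  have hlip : LipschitzOnWith (Real.toNNReal (dist x y)) γ (Set.Icc (0:ℝ) 1) := by
    apply LipschitzOnWith.of_dist_le_mul
    intro s hs t' ht'
    rw [hγd s hs t' ht', Real.coe_toNNReal _ dist_nonneg, Real.dist_eq]
    exact le_of_eq (mul_comm _ _)
  have hScl : IsClosed S :=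
    (hFc.comp_continuousOn hlip.continuousOn).preimage_isClosed_of_isClosed
      isClosed_Icc isClosed_Iic
  have h0S : (0:ℝ) ∈ S := by
    refine ⟨⟨le_refl 0, zero_le_one⟩, ?_⟩
    simp only [Set.mem_preimage, Set.mem_Iic]
    rw [hγ0]; exact hx
  have h1S : (1:ℝ) ∈ S := by
    refine ⟨⟨zero_le_one, le_refl 1⟩, ?_⟩
    simp only [Set.mem_preimage, Set.mem_Iic]
    rw [hγ1]; exact hy
  have hmidS : ∀ s ∈ S, ∀ t' ∈ S, (s + t')/2 ∈ S := by
    rintro s ⟨hsI, hsF⟩ t' ⟨htI, htF⟩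
    have hmI : (s + t')/2 ∈ Set.Icc (0:ℝ) 1 := by
      constructor
      · have := hsI.1; have := htI.1; linarith
      · have := hsI.2; have := htI.2; linarith
    have hmid : IsMidpoint (γ s) (γ t') (γ ((s + t')/2)) := by
      constructor
      · rw [hγd s hsI _ hmI, hγd s hsI t' htI,
          show s - (s + t')/2 = (s - t')/2 by ring, abs_div, abs_two]
        ring
      · rw [hγd t' htI _ hmI, hγd s hsI t' htI,
          show t' - (s + t')/2 = (t' - s)/2 by ring, abs_div, abs_two, abs_sub_comm]
        ring
    refine ⟨hmI, ?_⟩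
    simp only [Set.mem_preimage, Set.mem_Iic]
    exact le_trans (hq _ _ _ hmid) (max_le hsF htF)
  exact (icc_subset_of_midpoint_closed hScl h0S h1S hmidS ht).2

lemma sublevel_bounded (hp : 1 ≤ p) {x₀ : X}
    (h0 : Integrable (fun x => dist x x₀ ^ p) μ) (c : ℝ) :
    Bornology.IsBounded {y : X | ∫ x, dist x y ^ p ∂μ ≤ c} := by
  have hp0 : (0:ℝ) < p := lt_of_lt_of_le one_pos hp
  have hmono : Monotone (fun n : ℕ => Metric.closedBall x₀ (n:ℝ)) :=
    fun i j hij => Metric.closedBall_subset_closedBall (Nat.cast_le.2 hij)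
  have hU : (⋃ n : ℕ, Metric.closedBall x₀ (n:ℝ)) = Set.univ :=
    Set.eq_univ_of_forall fun z => Set.mem_iUnion.2
      ⟨⌈dist z x₀⌉₊, Metric.mem_closedBall.2 (Nat.le_ceil _)⟩
  have hA := MeasureTheory.tendsto_measure_iUnion_atTop (μ := μ) hmono
  rw [hU, measure_univ] at hA
  obtain ⟨n, hn⟩ := (hA.eventually (lt_mem_nhds (by norm_num : (1/2 : ℝ≥0∞) < 1))).exists
  simp only [Function.comp] at hn
  set T : ℝ := (2 * max c 1) ^ (1/p) with hTdef
  have hT2 : (0:ℝ) < 2 * max c 1 := by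
    have := le_max_right c 1; linarith
  have hTp : T ^ p = 2 * max c 1 := rpow_one_div_rpow hp hT2.le
  have hT0 : 0 ≤ T := Real.rpow_nonneg hT2.le _
  apply Bornology.IsBounded.subset (Metric.isBounded_closedBall (x := x₀) (r := n + T))
  intro y hy
  simp only [Set.mem_setOf_eq] at hy
  rw [Metric.mem_closedBall]
  by_contra hd
  push_neg at hd
  set c₀ : ℝ := dist y x₀ - n with hc₀
  have hTc₀ : T < c₀ := by rw [hc₀]; linarith
  have hc₀0 : 0 ≤ c₀ := le_trans hT0 hTc₀.le
  have hkey : c₀ ^ p * (μ (Metric.closedBall x₀ (n:ℝ))).toReal ≤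
      ∫ x in Metric.closedBall x₀ (n:ℝ), dist x y ^ p ∂μ := by
    apply setIntegral_ge_of_const_le_real measurableSet_closedBall (measure_ne_top μ _)
    · intro x hx
      apply Real.rpow_le_rpow hc₀0 _ hp0.le
      have h1 : dist x x₀ ≤ n := Metric.mem_closedBall.1 hx
      have h2 : dist y x₀ ≤ dist y x + dist x x₀ := dist_triangle _ _ _
      rw [dist_comm x y]
      rw [hc₀]; linarith
    · exact (integrable_distp hp h0 y).integrableOn
  have hle : ∫ x in Metric.closedBall x₀ (n:ℝ), dist x y ^ p ∂μ ≤ ∫ x, dist x y ^ p ∂μ :=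
    setIntegral_le_integral (integrable_distp hp h0 y)
      (Filter.Eventually.of_forall fun x => Real.rpow_nonneg dist_nonneg _)
  have h3 : (1/2 : ℝ) ≤ (μ (Metric.closedBall x₀ (n:ℝ))).toReal := by
    have := ENNReal.toReal_mono (measure_ne_top μ _) hn.le
    simpa using this
  have hc₀p : 0 ≤ c₀ ^ p := Real.rpow_nonneg hc₀0 _
  have hfin : c₀ ^ p * (1/2) ≤ c := by
    calc c₀ ^ p * (1/2) ≤ c₀ ^ p * (μ (Metric.closedBall x₀ (n:ℝ))).toReal :=
          mul_le_mul_of_nonneg_left h3 hc₀p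
      _ ≤ ∫ x, dist x y ^ p ∂μ := le_trans hkey hle
      _ ≤ c := hy
  have hTlt : T ^ p < c₀ ^ p := Real.rpow_lt_rpow hT0 hTc₀ hp0
  rw [hTp] at hTlt
  have := le_max_left c 1
  linarith

end Analysis

/-- Existence of `p`-barycenters on complete `p`-convex reflexive spaces,
and uniqueness under strict `p`-convexity for `p ∈ (1,∞)`. -/
theorem pBarycenter_exists (X : Type) [MetricSpace X] [CompleteSpace X]
    [MeasurableSpace X] [BorelSpace X] (p : ℝ) (hp : 1 ≤ p)
    (hconv : PConvexR X p) (hrefl : MetricReflexive X)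
    (μ : Measure X) [IsProbabilityMeasure μ]
    (hmom : ∃ x₀ : X, Integrable (fun x => dist x x₀ ^ p) μ) :
    (∃ b : X, ∀ y : X, ∫ x, dist x b ^ p ∂μ ≤ ∫ x, dist x y ^ p ∂μ) ∧
    ((1 < p ∧ StrictlyPConvexR X p) →
      ∃! b : X, ∀ y : X, ∫ x, dist x b ^ p ∂μ ≤ ∫ x, dist x y ^ p ∂μ) := by
  classical
  obtain ⟨x₀, h0⟩ := hmom
  haveI : Nonempty X := ⟨x₀⟩
  set F : X → ℝ := fun y => ∫ x, dist x y ^ p ∂μ with hFdef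
  have hFnn : ∀ y, 0 ≤ F y :=
    fun y => integral_nonneg fun x => Real.rpow_nonneg dist_nonneg _
  have hbdd : BddBelow (Set.range F) := ⟨0, by rintro _ ⟨y, rfl⟩; exact hFnn y⟩
  set m0 : ℝ := ⨅ y, F y with hm0def
  have hm0le : ∀ y, m0 ≤ F y := fun y => ciInf_le hbdd y
  have hq : ∀ a b m : X, IsMidpoint a b m → F m ≤ max (F a) (F b) := by
    intro a b m hm
    have h := F_mid_le hp hconv h0 hm
    have h1 := le_max_left (F a) (F b)
    have h2 := le_max_right (F a) (F b)
    show F m ≤ max (F a) (F b)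
    calc F m ≤ (F a + F b) / 2 := h
      _ ≤ max (F a) (F b) := by
          rcases le_total (F a) (F b) with hab | hab
          · rw [max_eq_right hab]; linarith
          · rw [max_eq_left hab]; linarith
  have hFc : Continuous F := cont_F hp h0
  set C : ℕ → Set X := fun k => {y : X | F y ≤ m0 + 1/(k+1)} with hCdef
  have hCne : ∀ k, (C k).Nonempty := by
    intro k
    have hlt : m0 < m0 + 1/((k:ℝ)+1) := lt_add_of_pos_right m0 (by positivity)
    obtain ⟨y, hy⟩ := exists_lt_of_ciInf_lt hlt
    exact ⟨y, le_of_lt hy⟩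
  have hCbd : ∀ k, Bornology.IsBounded (C k) := fun k => sublevel_bounded hp h0 _
  have hCcl : ∀ k, IsClosed (C k) := fun k => isClosed_le hFc continuous_const
  have hCcv : ∀ k, GConvex (C k) := fun k => sublevel_gconvex hFc hq _
  have hCanti : ∀ i j : ℕ, j ≤ i → C i ⊆ C j := by
    intro i j hij y hy
    have h1 : (1:ℝ)/((i:ℝ)+1) ≤ 1/((j:ℝ)+1) := by
      apply one_div_le_one_div_of_le (by positivity)
      have : (j:ℝ) ≤ i := Nat.cast_le.2 hij
      linarith
    simp only [hCdef, Set.mem_setOf_eq] at hy ⊢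
    linarith
  obtain ⟨b, hb⟩ := hrefl ℕ C hCne hCbd hCcl hCcv hCanti
  simp only [Set.mem_iInter] at hb
  have hFb : F b ≤ m0 := by
    apply le_of_forall_pos_le_add
    intro ε hε
    obtain ⟨k, hk⟩ := exists_nat_one_div_lt hε
    have := hb k
    simp only [hCdef, Set.mem_setOf_eq] at this
    linarith
  have hbmin : ∀ y : X, F b ≤ F y := fun y => le_trans hFb (hm0le y)
  refine ⟨⟨b, hbmin⟩, ?_⟩
  rintro ⟨hp1, hstrict⟩
  refine ⟨b, hbmin, ?_⟩
  intro b' hb'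
  by_contra hne
  obtain ⟨m, hm⟩ := hstrict.1 b' b
  have hlt : F m < (F b' + F b) / 2 := F_mid_lt hp1 hstrict h0 hne hm
  have heq : F b' = F b := le_antisymm (hb' b) (hbmin b')
  have h1 : F b' ≤ F m := hb' m
  linarith
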